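/- Let P, Q be two slicings of a triangulated category D, with phase functions φ^± (for P) and ψ^± (for Q) recording the maximal and minimal HN phases of objects. Define d(P,Q) = sup over all nonzero E ∈ D of max(|φ⁺(E) − ψ⁺(E)|, |φ⁻(E) − ψ⁻(E)|), and d'(P,Q) = sup over φ ∈ ℝ and nonzero E ∈ P(φ) of max(ψ⁺(E) − φ, φ − ψ⁻(E)). Then d(P,Q) = d'(P,Q). -/

import Mathlib

open CategoryTheory CategoryTheory.Limits CategoryTheory.Pretriangulated

/-- Harder-Narasimhan filtration data for an object `E` of a (pre)triangulated category with
respect to a collection of subcategories `P φ` (`φ ∈ ℝ`): a finite tower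
`0 = X₀ → X₁ → … → X_{n+1} ≅ E` whose successive cones `A_i` are nonzero, lie in `P (φs i)`
for a strictly decreasing sequence of phases `φs`, with largest phase `φmax` and smallest
phase `φmin`. -/
def IsHNFiltration {C : Type*} [Category C] [Preadditive C] [HasZeroObject C]
    [HasShift C ℤ] [∀ n : ℤ, (shiftFunctor C n).Additive] [Pretriangulated C]
    (P : ℝ → Set C) (φmax φmin : ℝ) (E : C) : Prop :=
  ∃ (n : ℕ) (X : Fin (n + 2) → C) (A : Fin (n + 1) → C) (φs : Fin (n + 1) → ℝ),
    StrictAnti φs ∧ IsZero (X 0) ∧ Nonempty (X (Fin.last (n + 1)) ≅ E) ∧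
    φs 0 = φmax ∧ φs (Fin.last n) = φmin ∧
    ∀ i : Fin (n + 1), ¬ IsZero (A i) ∧ A i ∈ P (φs i) ∧
      ∃ (f : X i.castSucc ⟶ X i.succ) (g : X i.succ ⟶ A i)
        (h : A i ⟶ (X i.castSucc)⟦(1 : ℤ)⟧),
        Triangle.mk f g h ∈ distTriang C

/-- A slicing of a triangulated category `D`: full (iso-closed) subcategories `P φ` for
`φ ∈ ℝ`, compatible with shift, with no morphisms from higher to lower phase, such that every
nonzero object has an HN filtration; the functions `φplus`, `φminus` record the maximal and
minimal HN phases of each nonzero object. -/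
structure SlicingData (C : Type*) [Category C] [Preadditive C] [HasZeroObject C]
    [HasShift C ℤ] [∀ n : ℤ, (shiftFunctor C n).Additive] [Pretriangulated C] where
  P : ℝ → Set C
  isoClosed : ∀ (φ : ℝ) (X Y : C), (X ≅ Y) → X ∈ P φ → Y ∈ P φ
  shift : ∀ (φ : ℝ) (X : C), X ∈ P (φ + 1) ↔ ∃ Y ∈ P φ, Nonempty (X ≅ Y⟦(1 : ℤ)⟧)
  homZero : ∀ (φ₁ φ₂ : ℝ), φ₂ < φ₁ → ∀ X ∈ P φ₁, ∀ Y ∈ P φ₂, ∀ f : X ⟶ Y, f = 0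
  φplus : C → ℝ
  φminus : C → ℝ
  hn : ∀ E : C, ¬ IsZero E → IsHNFiltration P (φplus E) (φminus E) E

section Aux

variable {C : Type*} [Category C] [Preadditive C] [HasZeroObject C]
  [HasShift C ℤ] [∀ n : ℤ, (shiftFunctor C n).Additive] [Pretriangulated C]

lemma hom_out_zero₂ {T : Triangle C} (hT : T ∈ distTriang C) {W : C}
    (h1 : ∀ f : T.obj₁ ⟶ W, f = 0) (h3 : ∀ f : T.obj₃ ⟶ W, f = 0) :
    ∀ f : T.obj₂ ⟶ W, f = 0 := by
  intro f
  obtain ⟨g, hg⟩ := Triangle.yoneda_exact₂ T hT f (h1 _)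
  rw [hg, h3 g, comp_zero]

lemma hom_in_zero₂ {T : Triangle C} (hT : T ∈ distTriang C) {W : C}
    (h1 : ∀ f : W ⟶ T.obj₁, f = 0) (h3 : ∀ f : W ⟶ T.obj₃, f = 0) :
    ∀ f : W ⟶ T.obj₂, f = 0 := by
  intro f
  obtain ⟨g, hg⟩ := Triangle.coyoneda_exact₂ T hT f (h3 _)
  rw [hg, h1 g, zero_comp]

lemma tower_hom_out_zero {n : ℕ} {X : Fin (n + 2) → C} {A : Fin (n + 1) → C}
    (h0 : IsZero (X 0))
    (ht : ∀ i : Fin (n + 1), ∃ (f : X i.castSucc ⟶ X i.succ) (g : X i.succ ⟶ A i)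
      (h : A i ⟶ (X i.castSucc)⟦(1 : ℤ)⟧), Triangle.mk f g h ∈ distTriang C)
    {W : C} (hA : ∀ i, ∀ f : A i ⟶ W, f = 0) :
    ∀ j, ∀ f : X j ⟶ W, f = 0 := by
  intro j
  induction j using Fin.induction with
  | zero => intro f; exact h0.eq_of_src f 0
  | succ i ih =>
    obtain ⟨f, g, h, hT⟩ := ht i
    exact hom_out_zero₂ hT ih (hA i)

lemma tower_hom_in_zero {n : ℕ} {X : Fin (n + 2) → C} {A : Fin (n + 1) → C}
    (h0 : IsZero (X 0))
    (ht : ∀ i : Fin (n + 1), ∃ (f : X i.castSucc ⟶ X i.succ) (g : X i.succ ⟶ A i)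
      (h : A i ⟶ (X i.castSucc)⟦(1 : ℤ)⟧), Triangle.mk f g h ∈ distTriang C)
    {W : C} (hA : ∀ i, ∀ f : W ⟶ A i, f = 0) :
    ∀ j, ∀ f : W ⟶ X j, f = 0 := by
  intro j
  induction j using Fin.induction with
  | zero => intro f; exact h0.eq_of_tgt f 0
  | succ i ih =>
    obtain ⟨f, g, h, hT⟩ := ht i
    exact hom_in_zero₂ hT ih (hA i)

lemma SlicingData.mem_shift (S : SlicingData C) {φ : ℝ} {X : C} (hX : X ∈ S.P φ) :
    X⟦(1 : ℤ)⟧ ∈ S.P (φ + 1) :=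
  (S.shift φ _).2 ⟨X, hX, ⟨Iso.refl _⟩⟩

lemma SlicingData.mem_unshift (S : SlicingData C) {φ : ℝ} {X : C} (hX : X ∈ S.P φ) :
    X⟦(-1 : ℤ)⟧ ∈ S.P (φ - 1) := by
  obtain ⟨Y, hY, ⟨e⟩⟩ := (S.shift (φ - 1) X).1 (by rwa [sub_add_cancel])
  exact S.isoClosed _ Y _
    (((shiftFunctorCompIsoId C (1 : ℤ) (-1 : ℤ) (by ring)).app Y).symm ≪≫
      (shiftFunctor C (-1 : ℤ)).mapIso e.symm) hY

end Aux

section Aux2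

variable {C : Type*} [Category C] [Preadditive C] [HasZeroObject C]
  [HasShift C ℤ] [∀ n : ℤ, (shiftFunctor C n).Additive] [Pretriangulated C]

/-- If `E` is HN-filtered with minimal phase `b` and `W ∈ P c` with `c < b`,
then `Hom(E, W) = 0`. -/
lemma SlicingData.hom_zero_of_lt_min (S : SlicingData C) {a b c : ℝ} {E W : C}
    (hE : IsHNFiltration S.P a b E) (hW : W ∈ S.P c) (hc : c < b) :
    ∀ f : E ⟶ W, f = 0 := by
  obtain ⟨n, X, A, φs, hanti, h0, ⟨e⟩, hφ0, hφl, hfac⟩ := hE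
  have hX : ∀ j, ∀ f : X j ⟶ W, f = 0 :=
    tower_hom_out_zero h0 (fun i => (hfac i).2.2) (fun i f =>
      S.homZero (φs i) c (lt_of_lt_of_le hc (hφl ▸ hanti.antitone (Fin.le_last i)))
        _ (hfac i).2.1 _ hW f)
  intro f
  calc f = e.inv ≫ (e.hom ≫ f) := by simp
  _ = e.inv ≫ 0 := by rw [hX _ (e.hom ≫ f)]
  _ = 0 := comp_zero

/-- If `E` is HN-filtered with maximal phase `a` and `W ∈ P c` with `a < c`,
then `Hom(W, E) = 0`. -/
lemma SlicingData.hom_zero_of_max_lt (S : SlicingData C) {a b c : ℝ} {E W : C}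
    (hE : IsHNFiltration S.P a b E) (hW : W ∈ S.P c) (hc : a < c) :
    ∀ f : W ⟶ E, f = 0 := by
  obtain ⟨n, X, A, φs, hanti, h0, ⟨e⟩, hφ0, hφl, hfac⟩ := hE
  have hX : ∀ j, ∀ f : W ⟶ X j, f = 0 :=
    tower_hom_in_zero h0 (fun i => (hfac i).2.2) (fun i f =>
      S.homZero c (φs i) (lt_of_le_of_lt (hφ0 ▸ hanti.antitone (Fin.zero_le i)) hc)
        _ hW _ (hfac i).2.1 f)
  intro f
  calc f = (f ≫ e.inv) ≫ e.hom := by simp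
  _ = 0 ≫ e.hom := by rw [hX _ (f ≫ e.inv)]
  _ = 0 := zero_comp

/-- If the minimal phase of `E` exceeds the maximal phase of `F`, then `Hom(E, F) = 0`. -/
lemma SlicingData.hom_zero_of_gap (S : SlicingData C) {a b a' b' : ℝ} {E F : C}
    (hE : IsHNFiltration S.P a b E) (hF : IsHNFiltration S.P a' b' F) (h : a' < b) :
    ∀ f : E ⟶ F, f = 0 := by
  obtain ⟨n, X, A, φs, hanti, h0, ⟨e⟩, hφ0, hφl, hfac⟩ := hE
  have hX : ∀ j, ∀ f : X j ⟶ F, f = 0 :=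
    tower_hom_out_zero h0 (fun i => (hfac i).2.2) (fun i f =>
      S.hom_zero_of_max_lt hF (hfac i).2.1
        (lt_of_lt_of_le h (hφl ▸ hanti.antitone (Fin.le_last i))) f)
  intro f
  calc f = e.inv ≫ (e.hom ≫ f) := by simp
  _ = e.inv ≫ 0 := by rw [hX _ (e.hom ≫ f)]
  _ = 0 := comp_zero

end Aux2

section Aux3

variable {C : Type*} [Category C] [Preadditive C] [HasZeroObject C]
  [HasShift C ℤ] [∀ n : ℤ, (shiftFunctor C n).Additive] [Pretriangulated C]

/-- From an HN filtration of `E` with maximal phase `a`, there is a nonzero map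
`W ⟶ E` with `W ∈ P a` nonzero. -/
lemma SlicingData.exists_hom_from_top (S : SlicingData C) {a b : ℝ} {E : C}
    (hE : IsHNFiltration S.P a b E) :
    ∃ W : C, W ∈ S.P a ∧ ¬ IsZero W ∧ ∃ f : W ⟶ E, f ≠ 0 := by
  obtain ⟨n, X, A, φs, hanti, h0, ⟨e⟩, hφ0, hφl, hfac⟩ := hE
  set j₀ : Fin (n + 2) := (0 : Fin (n + 1)).succ with hj₀
  -- the first triangle shows `X j₀ ≅ A 0`
  obtain ⟨f₀, g₀, h₀, hT₀⟩ := (hfac 0).2.2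
  have hz : IsZero (X (0 : Fin (n + 1)).castSucc) := by
    rw [Fin.castSucc_zero]; exact h0
  have : IsIso g₀ := (Triangle.isZero₁_iff_isIso₂ _ hT₀).1 hz
  have e₀ : X j₀ ≅ A 0 := asIso g₀
  have hW0 : ¬ IsZero (X j₀) := fun hzz => (hfac 0).1 (hzz.of_iso e₀.symm)
  have hWP : X j₀ ∈ S.P a := S.isoClosed a (A 0) _ e₀.symm (hφ0 ▸ (hfac 0).2.1)
  -- inductively, the composites `X j₀ ⟶ X j` are nonzero
  have key : ∀ j : Fin (n + 2), ∃ c : X j₀ ⟶ X j, (j₀ ≤ j → c ≠ 0) := by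
    intro j
    induction j using Fin.induction with
    | zero =>
      refine ⟨0, fun hle => absurd hle ?_⟩
      simp [hj₀, Fin.le_def]
    | succ i ih =>
      obtain ⟨c, hc⟩ := ih
      obtain ⟨f, g, h, hT⟩ := (hfac i).2.2
      by_cases hi : i = 0
      · subst hi
        exact ⟨𝟙 _, fun _ hid => hW0 ((Limits.IsZero.iff_id_eq_zero _).2 hid)⟩
      · have hle : j₀ ≤ i.castSucc := by
          rw [hj₀, Fin.succ_le_castSucc_iff]
          exact (Fin.pos_iff_ne_zero' i).2 hi
        refine ⟨c ≫ f, fun _ hcf => ?_⟩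
        -- if the composite vanishes, `c` factors through `A i ⟦-1⟧`
        obtain ⟨v, hv⟩ := Triangle.coyoneda_exact₂ _
          (inv_rot_of_distTriang _ hT) c hcf
        have hv0 : v = 0 :=
          S.homZero a (φs i - 1) (by
            have := hφ0 ▸ hanti.antitone (Fin.zero_le i)
            linarith) _ hWP _ (S.mem_unshift (hfac i).2.1) v
        exact hc hle (by rw [hv, hv0]; exact zero_comp)
  obtain ⟨c, hc⟩ := key (Fin.last (n + 1))
  have hc0 : c ≠ 0 := hc (Fin.le_last _)
  refine ⟨X j₀, hWP, hW0, c ≫ e.hom, fun hce => hc0 ?_⟩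
  calc c = (c ≫ e.hom) ≫ e.inv := by simp
  _ = 0 := by rw [hce, zero_comp]

/-- From an HN filtration of `E` with minimal phase `b`, there is a nonzero map
`E ⟶ W` with `W ∈ P b` nonzero. -/
lemma SlicingData.exists_hom_to_bot (S : SlicingData C) {a b : ℝ} {E : C}
    (hE : IsHNFiltration S.P a b E) :
    ∃ W : C, W ∈ S.P b ∧ ¬ IsZero W ∧ ∃ f : E ⟶ W, f ≠ 0 := by
  obtain ⟨n, X, A, φs, hanti, h0, ⟨e⟩, hφ0, hφl, hfac⟩ := hE
  set m : Fin (n + 1) := Fin.last n with hm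
  obtain ⟨f, g, h, hT⟩ := (hfac m).2.2
  -- `Hom (X j ⟦1⟧, A m) = 0` for all j
  have hshift : ∀ j, ∀ u : (X j)⟦(1 : ℤ)⟧ ⟶ A m, u = 0 := by
    refine tower_hom_out_zero (X := fun j => (X j)⟦(1 : ℤ)⟧) (A := fun i => (A i)⟦(1 : ℤ)⟧)
      ((shiftFunctor C (1 : ℤ)).map_isZero h0) (fun i => ?_) (fun i u => ?_)
    · obtain ⟨f', g', h', hT'⟩ := (hfac i).2.2
      exact ⟨_, _, _, rot_of_distTriang _ (rot_of_distTriang _ (rot_of_distTriang _ hT'))⟩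
    · refine S.homZero (φs i + 1) (φs m) ?_ _ (S.mem_shift (hfac i).2.1) _ (hfac m).2.1 u
      have := hanti.antitone (Fin.le_last i)
      rw [← hm] at this
      linarith
  -- the projection `g` is nonzero
  have hg : g ≠ 0 := by
    intro hg0
    obtain ⟨v, hv⟩ := Triangle.yoneda_exact₂ _ (rot_of_distTriang _ hT) (𝟙 (A m)) (by
      exact (Category.comp_id g).trans hg0)
    have : 𝟙 (A m) = 0 := by
      rw [hv, hshift _ v]; exact comp_zero
    exact (hfac m).1 ((Limits.IsZero.iff_id_eq_zero _).2 this)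
  have hml : m.succ = Fin.last (n + 1) := Fin.succ_last n
  have e' : E ≅ X m.succ := by rw [hml]; exact e.symm
  refine ⟨A m, hφl ▸ (hfac m).2.1, (hfac m).1, e'.hom ≫ g, fun hc => hg ?_⟩
  calc g = e'.inv ≫ (e'.hom ≫ g) := by simp
  _ = 0 := by rw [hc, comp_zero]

/-- Nonzero objects of `P φ` have extremal phases equal to `φ`. -/
lemma SlicingData.phase_eq (S : SlicingData C) {φ a b : ℝ} {E : C}
    (hmem : E ∈ S.P φ) (hE : IsHNFiltration S.P a b E) : a = φ ∧ b = φ := by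
  have hba : b ≤ a := by
    obtain ⟨n, X, A, φs, hanti, h0, ⟨e⟩, hφ0, hφl, hfac⟩ := hE
    rw [← hφ0, ← hφl]
    exact hanti.antitone (Fin.zero_le _)
  obtain ⟨W, hWP, hW0, f, hf⟩ := S.exists_hom_from_top hE
  obtain ⟨W', hWP', hW0', f', hf'⟩ := S.exists_hom_to_bot hE
  have ha : a ≤ φ := by
    by_contra hlt
    exact hf (S.homZero a φ (not_le.mp hlt) _ hWP _ hmem f)
  have hb : φ ≤ b := by
    by_contra hlt
    exact hf' (S.homZero φ b (not_le.mp hlt) _ hmem _ hWP' f')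
  constructor <;> linarith

end Aux3

/-- For two slicings `P`, `Q` of a triangulated category `D`, with
`φ±`/`ψ±` the extremal HN phases for `P`/`Q`, the generalized distances
`d(P,Q) = sup_{0 ≠ E} max(|φ⁺(E) − ψ⁺(E)|, |φ⁻(E) − ψ⁻(E)|)` and
`d'(P,Q) = sup {max(ψ⁺(E) − φ, φ − ψ⁻(E)) : φ ∈ ℝ, 0 ≠ E ∈ P(φ)}` coincide. -/
theorem stmt17 {C : Type*} [Category C] [Preadditive C] [HasZeroObject C]
    [HasShift C ℤ] [∀ n : ℤ, (shiftFunctor C n).Additive] [Pretriangulated C]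
    (Ps Qs : SlicingData C) :
    (⨆ E : {E : C // ¬ IsZero E}, ENNReal.ofReal
        (max |Ps.φplus E.1 - Qs.φplus E.1| |Ps.φminus E.1 - Qs.φminus E.1|)) =
    (⨆ x : {x : C × ℝ // x.1 ∈ Ps.P x.2 ∧ ¬ IsZero x.1}, ENNReal.ofReal
        (max (Qs.φplus x.1.1 - x.1.2) (x.1.2 - Qs.φminus x.1.1))) := by
  set d' := (⨆ x : {x : C × ℝ // x.1 ∈ Ps.P x.2 ∧ ¬ IsZero x.1}, ENNReal.ofReal
      (max (Qs.φplus x.1.1 - x.1.2) (x.1.2 - Qs.φminus x.1.1))) with hd'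
  apply le_antisymm
  · -- d ≤ d'
    refine iSup_le ?_
    rintro ⟨E, hE⟩
    dsimp only
    set φp := Ps.φplus E with hφp
    set φm := Ps.φminus E with hφm
    set ψp := Qs.φplus E with hψp
    set ψm := Qs.φminus E with hψm
    have hnP := Ps.hn E hE
    have hnQ := Qs.hn E hE
    -- (i) φp - ψp ≤ d'
    have h1 : ENNReal.ofReal (φp - ψp) ≤ d' := by
      obtain ⟨W, hWP, hW0, f, hf⟩ := Ps.exists_hom_from_top hnP
      have hW : Qs.φminus W ≤ ψp := by
        by_contra hlt
        exact hf (Qs.hom_zero_of_gap (Qs.hn W hW0) hnQ (not_le.mp hlt) f)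
      refine le_iSup_of_le ⟨(W, φp), hWP, hW0⟩ ?_
      exact ENNReal.ofReal_le_ofReal (le_trans (by linarith) (le_max_right _ _))
    -- (ii) ψm - φm ≤ d'
    have h2 : ENNReal.ofReal (ψm - φm) ≤ d' := by
      obtain ⟨W, hWP, hW0, f, hf⟩ := Ps.exists_hom_to_bot hnP
      have hW : ψm ≤ Qs.φplus W := by
        by_contra hlt
        exact hf (Qs.hom_zero_of_gap hnQ (Qs.hn W hW0) (not_le.mp hlt) f)
      refine le_iSup_of_le ⟨(W, φm), hWP, hW0⟩ ?_
      exact ENNReal.ofReal_le_ofReal (le_trans (by linarith) (le_max_left _ _))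
    -- (iii) ψp - φp ≤ d'
    have h3 : ENNReal.ofReal (ψp - φp) ≤ d' := by
      obtain ⟨B, hBQ, hB0, f, hf⟩ := Qs.exists_hom_from_top hnQ
      have hBm : Qs.φminus B = ψp := (Qs.phase_eq hBQ (Qs.hn B hB0)).2
      obtain ⟨n, X, A, φs, hanti, h0, ⟨e⟩, hφ0, hφl, hfac⟩ := hnP
      have hex : ¬ ∀ i, ∀ g : B ⟶ A i, g = 0 := by
        intro hall
        apply hf
        have := tower_hom_in_zero h0 (fun i => (hfac i).2.2) hall (Fin.last (n + 1))
          (f ≫ e.inv)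
        calc f = (f ≫ e.inv) ≫ e.hom := by simp
        _ = 0 := by rw [this, zero_comp]
      push_neg at hex
      obtain ⟨i, g, hg⟩ := hex
      have hAi := Qs.hn (A i) (hfac i).1
      have hle : Qs.φminus B ≤ Qs.φplus (A i) := by
        by_contra hlt
        exact hg (Qs.hom_zero_of_gap (Qs.hn B hB0) hAi (not_le.mp hlt) g)
      have hφi : φs i ≤ φp := by rw [hφp, ← hφ0]; exact hanti.antitone (Fin.zero_le i)
      refine le_iSup_of_le ⟨(A i, φs i), (hfac i).2.1, (hfac i).1⟩ ?_
      refine ENNReal.ofReal_le_ofReal (le_trans ?_ (le_max_left _ _))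
      rw [← hBm]
      linarith
    -- (iv) φm - ψm ≤ d'
    have h4 : ENNReal.ofReal (φm - ψm) ≤ d' := by
      obtain ⟨B, hBQ, hB0, f, hf⟩ := Qs.exists_hom_to_bot hnQ
      have hBp : Qs.φplus B = ψm := (Qs.phase_eq hBQ (Qs.hn B hB0)).1
      obtain ⟨n, X, A, φs, hanti, h0, ⟨e⟩, hφ0, hφl, hfac⟩ := hnP
      have hex : ¬ ∀ i, ∀ g : A i ⟶ B, g = 0 := by
        intro hall
        apply hf
        have := tower_hom_out_zero h0 (fun i => (hfac i).2.2) hall (Fin.last (n + 1))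
          (e.hom ≫ f)
        calc f = e.inv ≫ (e.hom ≫ f) := by simp
        _ = 0 := by rw [this, comp_zero]
      push_neg at hex
      obtain ⟨i, g, hg⟩ := hex
      have hAi := Qs.hn (A i) (hfac i).1
      have hle : Qs.φminus (A i) ≤ Qs.φplus B := by
        by_contra hlt
        exact hg (Qs.hom_zero_of_gap hAi (Qs.hn B hB0) (not_le.mp hlt) g)
      have hφi : φm ≤ φs i := by rw [hφm, ← hφl]; exact hanti.antitone (Fin.le_last i)
      refine le_iSup_of_le ⟨(A i, φs i), (hfac i).2.1, (hfac i).1⟩ ?_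
      refine ENNReal.ofReal_le_ofReal (le_trans ?_ (le_max_right _ _))
      rw [← hBp]
      linarith
    have habs1 : ENNReal.ofReal |φp - ψp| ≤ d' := by
      rcases abs_cases (φp - ψp) with ⟨h, _⟩ | ⟨h, _⟩
      · rw [h]; exact h1
      · rw [h, neg_sub]; exact h3
    have habs2 : ENNReal.ofReal |φm - ψm| ≤ d' := by
      rcases abs_cases (φm - ψm) with ⟨h, _⟩ | ⟨h, _⟩
      · rw [h]; exact h4
      · rw [h, neg_sub]; exact h2
    rcases max_cases |φp - ψp| |φm - ψm| with ⟨h, _⟩ | ⟨h, _⟩ <;> rw [h]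
    · exact habs1
    · exact habs2
  · -- d' ≤ d
    refine iSup_le ?_
    rintro ⟨⟨E, φ⟩, hmem, hE0⟩
    obtain ⟨hpe, hme⟩ := Ps.phase_eq hmem (Ps.hn E hE0)
    have hpe' : Ps.φplus E = φ := hpe
    have hme' : Ps.φminus E = φ := hme
    refine le_iSup_of_le (⟨E, hE0⟩ : {E : C // ¬ IsZero E}) ?_
    refine ENNReal.ofReal_le_ofReal ?_
    dsimp only
    refine max_le ?_ ?_
    · refine le_trans ?_ (le_max_left _ _)
      calc Qs.φplus E - φ = -(Ps.φplus E - Qs.φplus E) := by rw [hpe']; ring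
      _ ≤ |Ps.φplus E - Qs.φplus E| := neg_le_abs _
    · refine le_trans ?_ (le_max_right _ _)
      calc φ - Qs.φminus E = Ps.φminus E - Qs.φminus E := by rw [hme']
      _ ≤ |Ps.φminus E - Qs.φminus E| := le_abs_self _
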